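/- arXiv:1307.4724 — 4 statements merged into one kernel-verified Lean document; each statement's English description precedes it below -/
import Mathlib

section
/- Let G and H be finite connected nontrivial simple graphs. Then the strong product G_SR ⊠ H_SR of the strong resolving graphs is a subgraph of the strong resolving graph (G ⊠ H)_SR of the strong product; that is, they have the same vertex set V(G) × V(H), and every pair of vertices adjacent in G_SR ⊠ H_SR is adjacent in (G ⊠ H)_SR. -/
open SimpleGraph Finset

variable {α β : Type*}

/-- The strong product of two simple graphs: distinct vertices `(a,b)` and `(c,d)` are adjacent
iff (`a = c` or `a ~ c`) and (`b = d` or `b ~ d`). -/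
def strongProd (G : SimpleGraph α) (H : SimpleGraph β) : SimpleGraph (α × β) where
  Adj x y := x ≠ y ∧ (x.1 = y.1 ∨ G.Adj x.1 y.1) ∧ (x.2 = y.2 ∨ H.Adj x.2 y.2)
  symm := by
    constructor
    rintro x y ⟨h1, h2, h3⟩
    exact ⟨h1.symm, h2.imp Eq.symm (fun a => a.symm), h3.imp Eq.symm (fun a => a.symm)⟩
  loopless := ⟨fun x h => h.1 rfl⟩

/-- The Cartesian sum (disjunctive product) of two simple graphs. -/
def cartSum (G : SimpleGraph α) (H : SimpleGraph β) : SimpleGraph (α × β) where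
  Adj x y := x ≠ y ∧ (G.Adj x.1 y.1 ∨ H.Adj x.2 y.2)
  symm := by
    constructor
    rintro x y ⟨h1, h2⟩
    exact ⟨h1.symm, h2.imp (fun a => a.symm) (fun a => a.symm)⟩
  loopless := ⟨fun x h => h.1 rfl⟩

/-- `u` is maximally distant from `v` in `G`. -/
def MaximallyDistantFrom (G : SimpleGraph α) (u v : α) : Prop :=
  ∀ w, G.Adj u w → G.dist v w ≤ G.dist u v

/-- `u` and `v` are mutually maximally distant in `G`. -/
def MutuallyMaximallyDistant (G : SimpleGraph α) (u v : α) : Prop :=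
  MaximallyDistantFrom G u v ∧ MaximallyDistantFrom G v u

/-- The strong resolving graph of `G`. -/
def strongResolvingGraph (G : SimpleGraph α) : SimpleGraph α where
  Adj u v := u ≠ v ∧ MutuallyMaximallyDistant G u v
  symm := by constructor; rintro u v ⟨h1, h2, h3⟩; exact ⟨h1.symm, h3, h2⟩
  loopless := ⟨fun x h => h.1 rfl⟩

/-- A finset of vertices is independent if no two of its (distinct) members are adjacent. -/
def IsIndepFinset (G : SimpleGraph α) (s : Finset α) : Prop :=
  ∀ u ∈ s, ∀ v ∈ s, u ≠ v → ¬ G.Adj u v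

/-- The independence number `β(G)`. -/
noncomputable def indepNum (G : SimpleGraph α) [Fintype α] : ℕ :=
  sSup {n | ∃ s : Finset α, IsIndepFinset G s ∧ s.card = n}

/-- `w` strongly resolves `u` and `v` in `G`. -/
def StronglyResolves (G : SimpleGraph α) (w u v : α) : Prop :=
  G.dist w u = G.dist w v + G.dist v u ∨ G.dist w v = G.dist w u + G.dist u v

/-- A strong metric generator for `G`. -/
def IsStrongMetricGenerator (G : SimpleGraph α) (s : Finset α) : Prop :=
  ∀ u v : α, u ≠ v → ∃ w ∈ s, StronglyResolves G w u v

/-- The strong metric dimension of `G`. -/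
noncomputable def sdim (G : SimpleGraph α) [Fintype α] : ℕ :=
  sInf {n | ∃ s : Finset α, IsStrongMetricGenerator G s ∧ s.card = n}

-- lift walks
lemma liftRight {G : SimpleGraph α} {H : SimpleGraph β} (a : α) {b d : β} (q : H.Walk b d) :
    ∃ w : (strongProd G H).Walk (a, b) (a, d), w.length = q.length := by
  induction q with
  | nil => exact ⟨.nil, rfl⟩
  | @cons u v x h q ih =>
      obtain ⟨w, hw⟩ := ih
      exact ⟨SimpleGraph.Walk.cons (u := (a, u)) (v := (a, v))
        ⟨by simp [h.ne], Or.inl rfl, Or.inr h⟩ w, by show w.length + 1 = _; simp [hw]⟩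

lemma liftLeft {G : SimpleGraph α} {H : SimpleGraph β} {a c : α} (p : G.Walk a c) (b : β) :
    ∃ w : (strongProd G H).Walk (a, b) (c, b), w.length = p.length := by
  induction p with
  | nil => exact ⟨.nil, rfl⟩
  | @cons u v x h p ih =>
      obtain ⟨w, hw⟩ := ih
      exact ⟨SimpleGraph.Walk.cons (u := (u, b)) (v := (v, b))
        ⟨by simp [h.ne], Or.inr h, Or.inl rfl⟩ w, by show w.length + 1 = _; simp [hw]⟩

lemma exists_walk_strongProd {G : SimpleGraph α} {H : SimpleGraph β} {a c : α} {b d : β}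
    (p : G.Walk a c) (q : H.Walk b d) :
    ∃ w : (strongProd G H).Walk (a, b) (c, d), w.length = max p.length q.length := by
  induction p generalizing b d q with
  | @nil a =>
      obtain ⟨w, hw⟩ := liftRight (G := G) a q
      exact ⟨w, by simp [hw]⟩
  | @cons a a' c h p ih =>
      cases q with
      | nil =>
          obtain ⟨w, hw⟩ := liftLeft (H := H) (SimpleGraph.Walk.cons h p) b
          exact ⟨w, by simp [hw]⟩
      | @cons b b' d h' q =>
          obtain ⟨w, hw⟩ := ih q
          refine ⟨SimpleGraph.Walk.cons (u := (a, b)) (v := (a', b'))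
            ⟨by simp [h.ne], Or.inr h, Or.inr h'⟩ w, ?_⟩
          show w.length + 1 = max (p.length + 1) (q.length + 1)
          omega

lemma proj_le {G : SimpleGraph α} {H : SimpleGraph β} (hG : G.Connected) (hH : H.Connected)
    {x y : α × β} (w : (strongProd G H).Walk x y) :
    G.dist x.1 y.1 ≤ w.length ∧ H.dist x.2 y.2 ≤ w.length := by
  induction w with
  | nil => simp
  | @cons x z y h w ih =>
      have hz1 : G.dist x.1 z.1 ≤ 1 := by
        rcases h.2.1 with h2 | h2
        · simp [h2, SimpleGraph.dist_self]
        · exact le_of_eq (dist_eq_one_iff_adj.mpr h2)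
      have hz2 : H.dist x.2 z.2 ≤ 1 := by
        rcases h.2.2 with h3 | h3
        · simp [h3, SimpleGraph.dist_self]
        · exact le_of_eq (dist_eq_one_iff_adj.mpr h3)
      constructor
      · calc G.dist x.1 y.1 ≤ G.dist x.1 z.1 + G.dist z.1 y.1 := hG.dist_triangle
          _ ≤ 1 + w.length := Nat.add_le_add hz1 ih.1
          _ = (SimpleGraph.Walk.cons h w).length := by simp [Nat.add_comm]
      · calc H.dist x.2 y.2 ≤ H.dist x.2 z.2 + H.dist z.2 y.2 := hH.dist_triangle
          _ ≤ 1 + w.length := Nat.add_le_add hz2 ih.2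
          _ = (SimpleGraph.Walk.cons h w).length := by simp [Nat.add_comm]

lemma dist_strongProd {G : SimpleGraph α} {H : SimpleGraph β} (hG : G.Connected)
    (hH : H.Connected) (a c : α) (b d : β) :
    (strongProd G H).dist (a, b) (c, d) = max (G.dist a c) (H.dist b d) := by
  obtain ⟨p, hp⟩ := hG.exists_walk_length_eq_dist a c
  obtain ⟨q, hq⟩ := hH.exists_walk_length_eq_dist b d
  obtain ⟨w, hw⟩ := exists_walk_strongProd (H := H) p q
  refine le_antisymm (by rw [← hp, ← hq, ← hw]; exact SimpleGraph.dist_le w) ?_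
  obtain ⟨w', hw'⟩ := SimpleGraph.Reachable.exists_walk_length_eq_dist (⟨w⟩ :
    (strongProd G H).Reachable (a, b) (c, d))
  have := proj_le hG hH w'
  exact max_le (hw' ▸ this.1) (hw' ▸ this.2)

lemma md_helper {G : SimpleGraph α} {H : SimpleGraph β} (hG : G.Connected) (hH : H.Connected)
    {a c : α} {b d : β} (hne : (a, b) ≠ ((c, d) : α × β))
    (h1 : a = c ∨ (strongResolvingGraph G).Adj a c)
    (h2 : b = d ∨ (strongResolvingGraph H).Adj b d) :
    MaximallyDistantFrom (strongProd G H) (a, b) (c, d) := by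
  rintro ⟨w1, w2⟩ ⟨hwne, hw1, hw2⟩
  dsimp only at hw1 hw2
  rw [dist_strongProd hG hH, dist_strongProd hG hH]
  have hG1 : ∀ (hac : a ≠ c), MaximallyDistantFrom G a c → G.dist c w1 ≤ G.dist a c := by
    intro hac hmd
    rcases hw1 with h | h
    · rw [← h, SimpleGraph.dist_comm]
    · exact hmd w1 h
  have hH1 : ∀ (hbd : b ≠ d), MaximallyDistantFrom H b d → H.dist d w2 ≤ H.dist b d := by
    intro hbd hmd
    rcases hw2 with h | h
    · rw [← h, SimpleGraph.dist_comm]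
    · exact hmd w2 h
  rcases h1 with h1 | ⟨hac, hmdG, _⟩
  · rcases h2 with h2 | ⟨hbd, hmdH, _⟩
    · exact absurd (Prod.ext h1 h2) hne
    · subst h1
      have hd1 : G.dist a w1 ≤ 1 := by
        rcases hw1 with h | h
        · simp [← h, SimpleGraph.dist_self]
        · exact le_of_eq (dist_eq_one_iff_adj.mpr h)
      have hpos : 1 ≤ H.dist b d := hH.pos_dist_of_ne hbd
      exact max_le (le_max_of_le_right (hd1.trans hpos)) (le_max_of_le_right (hH1 hbd hmdH))
  · rcases h2 with h2 | ⟨hbd, hmdH, _⟩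
    · subst h2
      have hd1 : H.dist b w2 ≤ 1 := by
        rcases hw2 with h | h
        · simp [← h, SimpleGraph.dist_self]
        · exact le_of_eq (dist_eq_one_iff_adj.mpr h)
      have hpos : 1 ≤ G.dist a c := hG.pos_dist_of_ne hac
      exact max_le (le_max_of_le_left (hG1 hac hmdG)) (le_max_of_le_left (hd1.trans hpos))
    · exact max_le_max (hG1 hac hmdG) (hH1 hbd hmdH)

theorem strongProd_SR_le_SR_strongProd [Fintype α] [Fintype β]
    (G : SimpleGraph α) (H : SimpleGraph β)
    (hG : G.Connected) (hGn : Nontrivial α) (hH : H.Connected) (hHn : Nontrivial β) :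
    strongProd (strongResolvingGraph G) (strongResolvingGraph H) ≤
      strongResolvingGraph (strongProd G H) := by
  rintro ⟨a, b⟩ ⟨c, d⟩ ⟨hne, h1, h2⟩
  refine ⟨hne, md_helper hG hH hne h1 h2, ?_⟩
  have h1' : c = a ∨ (strongResolvingGraph G).Adj c a := by
    rcases h1 with h | h
    · exact Or.inl h.symm
    · exact Or.inr h.symm
  have h2' : d = b ∨ (strongResolvingGraph H).Adj d b := by
    rcases h2 with h | h
    · exact Or.inl h.symm
    · exact Or.inr h.symm
  exact md_helper hG hH (Ne.symm hne) h1' h2'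
end

section
/- Let G be a finite simple graph whose vertex set can be partitioned into β(G) cliques (a C-graph), and let H be any finite simple graph. Then β(G ⊠ H) = β(G) · β(H). -/
open SimpleGraph Finset

variable {α β : Type*}

/-- A `C`-graph: the vertex set can be partitioned into `β(G)` cliques. -/
def IsCGraph (G : SimpleGraph α) [Fintype α] [DecidableEq α] : Prop :=
  ∃ P : Finpartition (Finset.univ : Finset α),
    P.parts.card = _root_.indepNum G ∧ ∀ p ∈ P.parts, G.IsClique (p : Set α)

/-- A `C₁`-graph: the vertex set can be partitioned into `β(G)` cliques together with one
singleton `{b}`, where `b` is an isolated vertex. -/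
def IsC1Graph (G : SimpleGraph α) [Fintype α] [DecidableEq α] : Prop :=
  ∃ (P : Finpartition (Finset.univ : Finset α)) (b : α),
    {b} ∈ P.parts ∧ (∀ w, ¬ G.Adj b w) ∧
    P.parts.card = _root_.indepNum G + 1 ∧
    ∀ p ∈ P.parts, p ≠ {b} → G.IsClique (p : Set α)

/-- The diameter of a graph: the largest distance between two vertices. -/
noncomputable def gDiam (G : SimpleGraph α) : ℕ := sSup {d | ∃ u v : α, G.dist u v = d}

lemma bddAbove_indepSet (G : SimpleGraph α) [Fintype α] :
    BddAbove {n | ∃ s : Finset α, IsIndepFinset G s ∧ s.card = n} := by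
  refine ⟨Fintype.card α, ?_⟩
  rintro n ⟨s, -, rfl⟩
  exact s.card_le_univ

lemma card_le_indepNum (G : SimpleGraph α) [Fintype α] {s : Finset α}
    (h : IsIndepFinset G s) : s.card ≤ _root_.indepNum G :=
  le_csSup (bddAbove_indepSet G) ⟨s, h, rfl⟩

lemma exists_indep_card_eq (G : SimpleGraph α) [Fintype α] :
    ∃ s : Finset α, IsIndepFinset G s ∧ s.card = _root_.indepNum G := by
  have hne : {n | ∃ s : Finset α, IsIndepFinset G s ∧ s.card = n}.Nonempty :=
    ⟨0, ∅, by intro u hu; simp at hu, rfl⟩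
  exact Nat.sSup_mem hne (bddAbove_indepSet G)

theorem indepNum_strongProd_of_CGraph [Fintype α] [DecidableEq α] [Fintype β]
    (G : SimpleGraph α) (H : SimpleGraph β) (hC : IsCGraph G) :
    _root_.indepNum (strongProd G H) = _root_.indepNum G * _root_.indepNum H := by
  classical
  obtain ⟨P, hPcard, hPclique⟩ := hC
  apply le_antisymm
  · -- upper bound
    obtain ⟨T, hT, hTcard⟩ := exists_indep_card_eq (strongProd G H)
    rw [← hTcard]
    -- assign each element of T to the part containing its first coordinate
    have hmem : ∀ x : α × β, x.1 ∈ (Finset.univ : Finset α) := fun x => Finset.mem_univ _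
    set f : α × β → Finset α := fun x => (P.exists_mem (hmem x)).choose with hf
    have hfP : ∀ x : α × β, f x ∈ P.parts := fun x => (P.exists_mem (hmem x)).choose_spec.1
    have hfx : ∀ x : α × β, x.1 ∈ f x := fun x => (P.exists_mem (hmem x)).choose_spec.2
    have hsum : T.card = ∑ p ∈ P.parts, (T.filter (fun x => f x = p)).card :=
      Finset.card_eq_sum_card_fiberwise (fun x _ => hfP x)
    have hfiber : ∀ p ∈ P.parts, (T.filter (fun x => f x = p)).card ≤ _root_.indepNum H := by
      intro p hp
      have hclique := hPclique p hp
      set F := T.filter (fun x => f x = p) with hF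
      have hmemp : ∀ x ∈ F, x.1 ∈ p := by
        intro x hx
        rw [hF, Finset.mem_filter] at hx
        rw [← hx.2]; exact hfx x
      have hinj : Set.InjOn Prod.snd (F : Set (α × β)) := by
        intro x hx y hy hxy
        by_contra hne
        have hxT : x ∈ T := (Finset.mem_filter.1 hx).1
        have hyT : y ∈ T := (Finset.mem_filter.1 hy).1
        have hx1 : x.1 ≠ y.1 := by
          intro h; exact hne (Prod.ext h hxy)
        have hadj : G.Adj x.1 y.1 := hclique (hmemp x hx) (hmemp y hy) hx1
        exact hT x hxT y hyT hne ⟨hne, Or.inr hadj, Or.inl hxy⟩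
      have himg : IsIndepFinset H (F.image Prod.snd) := by
        intro u hu v hv huv hadj
        obtain ⟨x, hx, rfl⟩ := Finset.mem_image.1 hu
        obtain ⟨y, hy, rfl⟩ := Finset.mem_image.1 hv
        have hxy : x ≠ y := fun h => huv (by rw [h])
        have hxT : x ∈ T := (Finset.mem_filter.1 hx).1
        have hyT : y ∈ T := (Finset.mem_filter.1 hy).1
        have h1 : x.1 = y.1 ∨ G.Adj x.1 y.1 := by
          by_cases h : x.1 = y.1
          · exact Or.inl h
          · exact Or.inr (hclique (hmemp x hx) (hmemp y hy) h)
        exact hT x hxT y hyT hxy ⟨hxy, h1, Or.inr hadj⟩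
      calc F.card = (F.image Prod.snd).card := (Finset.card_image_of_injOn hinj).symm
        _ ≤ _root_.indepNum H := card_le_indepNum H himg
    calc T.card = ∑ p ∈ P.parts, (T.filter (fun x => f x = p)).card := hsum
      _ ≤ ∑ _p ∈ P.parts, _root_.indepNum H := Finset.sum_le_sum hfiber
      _ = P.parts.card * _root_.indepNum H := by rw [Finset.sum_const, smul_eq_mul]
      _ = _root_.indepNum G * _root_.indepNum H := by rw [hPcard]
  · -- lower bound
    obtain ⟨s, hs, hscard⟩ := exists_indep_card_eq G
    obtain ⟨t, ht, htcard⟩ := exists_indep_card_eq H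
    have hindep : IsIndepFinset (strongProd G H) (s ×ˢ t) := by
      rintro x hx y hy hxy ⟨-, h1, h2⟩
      obtain ⟨hx1, hx2⟩ := Finset.mem_product.1 hx
      obtain ⟨hy1, hy2⟩ := Finset.mem_product.1 hy
      rcases h1 with h1 | h1
      · rcases h2 with h2 | h2
        · exact hxy (Prod.ext h1 h2)
        · exact ht x.2 hx2 y.2 hy2 (H.ne_of_adj h2) h2
      · exact hs x.1 hx1 y.1 hy1 (G.ne_of_adj h1) h1
    have := card_le_indepNum (strongProd G H) hindep
    rwa [Finset.card_product, hscard, htcard] at this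
end

section
/- Let G be a finite tree of order n₁ ≥ 2 with l(G) leaves, and let H be a finite connected nontrivial simple graph of order n₂. Then dim_s(G ⊠ H) = n₂(l(G) − 1) + n₁ · dim_s(H) − (l(G) − 1) · dim_s(H). -/
open SimpleGraph Finset

variable {α β : Type*}

section General
variable {G : SimpleGraph α}

lemma univ_gen [Fintype α] : IsStrongMetricGenerator G Finset.univ := by
  intro u v _
  refine ⟨u, Finset.mem_univ u, Or.inr ?_⟩
  rw [SimpleGraph.dist_self]
  omega

lemma exists_adj_near (hc : G.Connected) {v w : α} (h : v ≠ w) :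
    ∃ v', G.Adj v v' ∧ G.dist v' w + 1 ≤ G.dist v w := by
  obtain ⟨p, hp⟩ := (hc v w).exists_walk_length_eq_dist
  cases p with
  | nil => exact absurd rfl h
  | cons hadj q =>
    refine ⟨_, hadj, ?_⟩
    have := SimpleGraph.dist_le q
    simp only [SimpleGraph.Walk.length_cons] at hp
    omega

lemma dist_adj_le (hc : G.Connected) {u w : α} (h : G.Adj u w) (v : α) :
    G.dist v w ≤ G.dist v u + 1 := by
  have h1 := hc.dist_triangle (u := v) (v := u) (w := w)
  have h2 : G.dist u w ≤ 1 := SimpleGraph.dist_le (h.toWalk)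
  omega

lemma resolves_of_mmd (hc : G.Connected) {u v w : α} (_ : u ≠ v)
    (hm : MutuallyMaximallyDistant G u v) (hr : StronglyResolves G w u v) :
    w = u ∨ w = v := by
  by_contra hw
  push_neg at hw
  obtain ⟨hwu, hwv⟩ := hw
  rcases hr with h | h
  · obtain ⟨v', hadj, hd⟩ := exists_adj_near hc (Ne.symm hwv)
    have t1 : G.dist w u ≤ G.dist w v' + G.dist v' u := hc.dist_triangle
    have t2 : G.dist u v' ≤ G.dist v u := hm.2 v' hadj
    have e1 : G.dist v' w = G.dist w v' := SimpleGraph.dist_comm ..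
    have e2 : G.dist v' u = G.dist u v' := SimpleGraph.dist_comm ..
    have e3 : G.dist v u = G.dist u v := SimpleGraph.dist_comm ..
    have e4 : G.dist v w = G.dist w v := SimpleGraph.dist_comm ..
    omega
  · obtain ⟨u', hadj, hd⟩ := exists_adj_near hc (Ne.symm hwu)
    have t1 : G.dist w v ≤ G.dist w u' + G.dist u' v := hc.dist_triangle
    have t2 : G.dist v u' ≤ G.dist u v := hm.1 u' hadj
    have e1 : G.dist u' w = G.dist w u' := SimpleGraph.dist_comm ..
    have e2 : G.dist u' v = G.dist v u' := SimpleGraph.dist_comm ..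
    have e3 : G.dist u w = G.dist w u := SimpleGraph.dist_comm ..
    have e4 : G.dist v u = G.dist u v := SimpleGraph.dist_comm ..
    omega

lemma dist_lt_card [Fintype α] (hc : G.Connected) (u v : α) :
    G.dist u v < Fintype.card α := by
  obtain ⟨p, hp, hl⟩ := hc.exists_path_of_dist u v
  rw [← hl]
  exact hp.length_lt

lemma exists_md [Fintype α] (hc : G.Connected) (v : α) (u : α) :
    ∃ u', MaximallyDistantFrom G u' v ∧ G.dist v u' = G.dist v u + G.dist u u' := by
  suffices H : ∀ k u, Fintype.card α - G.dist v u ≤ k →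
      ∃ u', MaximallyDistantFrom G u' v ∧ G.dist v u' = G.dist v u + G.dist u u' by
    exact H (Fintype.card α) u (by omega)
  intro k
  induction k with
  | zero => intro u hu; exact absurd hu (by have := dist_lt_card hc v u; omega)
  | succ k ih =>
    intro u hu
    by_cases hmd : MaximallyDistantFrom G u v
    · exact ⟨u, hmd, by simp⟩
    · rw [MaximallyDistantFrom] at hmd
      push_neg at hmd
      obtain ⟨w, hadj, hgt⟩ := hmd
      have e0 : G.dist u v = G.dist v u := SimpleGraph.dist_comm ..
      have hle : G.dist v w ≤ G.dist v u + 1 := dist_adj_le hc hadj v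
      have hw : G.dist v w = G.dist v u + 1 := by omega
      obtain ⟨u', hmd', hd'⟩ := ih w (by omega)
      refine ⟨u', hmd', ?_⟩
      have t1 : G.dist v u' ≤ G.dist v u + G.dist u u' := hc.dist_triangle
      have t2 : G.dist u u' ≤ G.dist u w + G.dist w u' := hc.dist_triangle
      have t3 : G.dist u w ≤ 1 := SimpleGraph.dist_le hadj.toWalk
      omega

lemma md_of_between (hc : G.Connected) {u v w : α} (hmd : MaximallyDistantFrom G u v)
    (h : G.dist w u = G.dist w v + G.dist v u) : MaximallyDistantFrom G u w := by
  intro x hx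
  have t1 : G.dist w x ≤ G.dist w v + G.dist v x := hc.dist_triangle
  have t2 : G.dist v x ≤ G.dist u v := hmd x hx
  have e1 : G.dist v u = G.dist u v := SimpleGraph.dist_comm ..
  have e2 : G.dist u w = G.dist w u := SimpleGraph.dist_comm ..
  omega

lemma vc_gen [Fintype α] (hc : G.Connected) {s : Finset α}
    (hvc : ∀ u v, (strongResolvingGraph G).Adj u v → u ∈ s ∨ v ∈ s) :
    IsStrongMetricGenerator G s := by
  intro u v hne
  obtain ⟨u', hmdu, hdu⟩ := exists_md hc v u
  obtain ⟨v', hmdv, hdv⟩ := exists_md hc u' v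
  have c1 : G.dist v' u' = G.dist u' v' := SimpleGraph.dist_comm ..
  have c2 : G.dist v' v = G.dist v v' := SimpleGraph.dist_comm ..
  have c3 : G.dist v u' = G.dist u' v := SimpleGraph.dist_comm ..
  have h1 : G.dist v' u' = G.dist v' v + G.dist v u' := by omega
  have hmdu' : MaximallyDistantFrom G u' v' := md_of_between hc hmdu h1
  have hpos : 0 < G.dist v u := (hc v u).pos_dist_of_ne (Ne.symm hne)
  have hneq : u' ≠ v' := by
    intro hEq
    rw [hEq, SimpleGraph.dist_self] at h1
    rw [hEq] at c3 hdu
    omega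
  have hadj : (strongResolvingGraph G).Adj u' v' := ⟨hneq, hmdu', hmdv⟩
  rcases hvc _ _ hadj with h | h
  · refine ⟨u', h, Or.inr ?_⟩
    have d1 : G.dist u' v = G.dist v u' := SimpleGraph.dist_comm ..
    have d2 : G.dist u' u = G.dist u u' := SimpleGraph.dist_comm ..
    have d3 : G.dist u v = G.dist v u := SimpleGraph.dist_comm ..
    omega
  · refine ⟨v', h, Or.inl ?_⟩
    have t1 : G.dist v' u' ≤ G.dist v' u + G.dist u u' := hc.dist_triangle
    have t2 : G.dist v' u ≤ G.dist v' v + G.dist v u := hc.dist_triangle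
    omega

lemma gen_vc (hc : G.Connected) {s : Finset α} (hg : IsStrongMetricGenerator G s) :
    ∀ u v, (strongResolvingGraph G).Adj u v → u ∈ s ∨ v ∈ s := by
  intro u v hadj
  obtain ⟨hne, hmmd⟩ := hadj
  obtain ⟨w, hws, hr⟩ := hg u v hne
  rcases resolves_of_mmd hc hne hmmd hr with h | h <;> [left; right] <;> rwa [← h]

theorem sdim_add_indepNum [Fintype α] (hc : G.Connected) :
    sdim G + _root_.indepNum (strongResolvingGraph G) = Fintype.card α := by
  classical
  have hSne : {n | ∃ s : Finset α, IsStrongMetricGenerator G s ∧ s.card = n}.Nonempty :=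
    ⟨_, Finset.univ, univ_gen, rfl⟩
  obtain ⟨s₀, hs₀g, hs₀c⟩ := Nat.sInf_mem hSne
  have hIbdd : BddAbove {n | ∃ s : Finset α,
      IsIndepFinset (strongResolvingGraph G) s ∧ s.card = n} := by
    refine ⟨Fintype.card α, ?_⟩
    rintro n ⟨s, _, rfl⟩
    exact s.card_le_univ.trans_eq (Finset.card_univ)
  have hIne : {n | ∃ s : Finset α,
      IsIndepFinset (strongResolvingGraph G) s ∧ s.card = n}.Nonempty :=
    ⟨0, ∅, fun u hu => absurd hu (by simp), rfl⟩
  obtain ⟨I₀, hI₀i, hI₀c⟩ := Nat.sSup_mem hIne hIbdd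
  have hle1 : Fintype.card α ≤ sdim G + _root_.indepNum (strongResolvingGraph G) := by
    have hcompl : IsIndepFinset (strongResolvingGraph G) s₀ᶜ := by
      intro x hx y hy hxy hadj
      rcases gen_vc hc hs₀g x y hadj with h | h
      · exact (Finset.mem_compl.mp hx) h
      · exact (Finset.mem_compl.mp hy) h
    have h1 : s₀ᶜ.card ≤ _root_.indepNum (strongResolvingGraph G) :=
      le_csSup hIbdd ⟨s₀ᶜ, hcompl, rfl⟩
    have h2 : s₀.card + s₀ᶜ.card = Fintype.card α := Finset.card_add_card_compl s₀
    rw [sdim, ← hs₀c]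
    omega
  have hle2 : sdim G + _root_.indepNum (strongResolvingGraph G) ≤ Fintype.card α := by
    have hvc : IsStrongMetricGenerator G I₀ᶜ := by
      refine vc_gen hc ?_
      intro u v hadj
      by_contra hcon
      push_neg at hcon
      simp only [Finset.mem_compl, not_not] at hcon
      exact hI₀i u hcon.1 v hcon.2 hadj.1 hadj
    have h1 : sdim G ≤ I₀ᶜ.card := Nat.sInf_le ⟨I₀ᶜ, hvc, rfl⟩
    have h2 : I₀.card + I₀ᶜ.card = Fintype.card α := Finset.card_add_card_compl I₀
    rw [_root_.indepNum, ← hI₀c]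
    omega
  omega

end General
section Prod
variable {G : SimpleGraph α} {H : SimpleGraph β}

def homSnd (G : SimpleGraph α) (H : SimpleGraph β) (c : α) : H →g strongProd G H where
  toFun b := (c, b)
  map_rel' := fun h => ⟨fun hEq => h.ne (congrArg Prod.snd hEq), Or.inl rfl, Or.inr h⟩

def homFst (G : SimpleGraph α) (H : SimpleGraph β) (b : β) : G →g strongProd G H where
  toFun a := (a, b)
  map_rel' := fun h => ⟨fun hEq => h.ne (congrArg Prod.fst hEq), Or.inr h, Or.inl rfl⟩

lemma walkProd {a c : α} {b d : β} (p : G.Walk a c) (q : H.Walk b d) :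
    ∃ r : (strongProd G H).Walk (a, b) (c, d), r.length = max p.length q.length := by
  induction p generalizing b d q with
  | nil =>
    exact ⟨q.map (homSnd G H _), (SimpleGraph.Walk.length_map _ _).trans (by simp)⟩
  | @cons a a₂ c h p' ih =>
    cases q with
    | nil => exact ⟨(SimpleGraph.Walk.cons h p').map (homFst G H _), (SimpleGraph.Walk.length_map _ _).trans (by simp)⟩
    | @cons b b₂ d h₂ q' =>
      obtain ⟨r, hr⟩ := ih q'
      refine ⟨SimpleGraph.Walk.cons
        ⟨fun hEq => h.ne (congrArg Prod.fst hEq), Or.inr h, Or.inr h₂⟩ r, ?_⟩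
      change r.length + 1 = _
      simp only [SimpleGraph.Walk.length_cons, hr]
      omega

lemma prod_connected (hc : G.Connected) (hH : H.Connected) :
    (strongProd G H).Connected := by
  have hne : Nonempty (α × β) := ⟨(hc.nonempty.some, hH.nonempty.some)⟩
  refine ⟨fun x y => ?_⟩
  obtain ⟨p, -⟩ := walkProd ((hc x.1 y.1).some) ((hH x.2 y.2).some)
  exact ⟨p⟩

lemma walk_proj_fst {x y : α × β} (r : (strongProd G H).Walk x y) :
    ∃ p : G.Walk x.1 y.1, p.length ≤ r.length := by
  induction r with
  | nil => exact ⟨SimpleGraph.Walk.nil, le_rfl⟩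
  | @cons x z y h r' ih =>
    obtain ⟨p, hp⟩ := ih
    rcases h.2.1 with heq | hadj
    · exact ⟨p.copy heq.symm rfl, by simpa using hp.trans (by simp)⟩
    · exact ⟨SimpleGraph.Walk.cons hadj p, by simpa using hp⟩

lemma walk_proj_snd {x y : α × β} (r : (strongProd G H).Walk x y) :
    ∃ p : H.Walk x.2 y.2, p.length ≤ r.length := by
  induction r with
  | nil => exact ⟨SimpleGraph.Walk.nil, le_rfl⟩
  | @cons x z y h r' ih =>
    obtain ⟨p, hp⟩ := ih
    rcases h.2.2 with heq | hadj
    · exact ⟨p.copy heq.symm rfl, by simpa using hp.trans (by simp)⟩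
    · exact ⟨SimpleGraph.Walk.cons hadj p, by simpa using hp⟩

lemma dist_prod (hc : G.Connected) (hH : H.Connected) (a c : α) (b d : β) :
    (strongProd G H).dist (a, b) (c, d) = max (G.dist a c) (H.dist b d) := by
  apply le_antisymm
  · obtain ⟨p, hp⟩ := (hc a c).exists_walk_length_eq_dist
    obtain ⟨q, hq⟩ := (hH b d).exists_walk_length_eq_dist
    obtain ⟨r, hr⟩ := walkProd p q
    have := SimpleGraph.dist_le r
    omega
  · obtain ⟨r, hr⟩ := ((prod_connected hc hH) (a, b) (c, d)).exists_walk_length_eq_dist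
    obtain ⟨p, hp⟩ := walk_proj_fst r
    obtain ⟨q, hq⟩ := walk_proj_snd r
    have h1 := SimpleGraph.dist_le p
    have h2 := SimpleGraph.dist_le q
    simp only at h1 h2
    omega

lemma mdProd_iff (hc : G.Connected) (hH : H.Connected) {a c : α} {b d : β} :
    MaximallyDistantFrom (strongProd G H) (a, b) (c, d) ↔
      ((∀ a', G.Adj a a' → G.dist c a' ≤ max (G.dist c a) (H.dist d b)) ∧
       (∀ b', H.Adj b b' → H.dist d b' ≤ max (G.dist c a) (H.dist d b))) := by
  have e0 : (strongProd G H).dist (a, b) (c, d) = max (G.dist c a) (H.dist d b) := by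
    rw [dist_prod hc hH, SimpleGraph.dist_comm (u := a) (v := c),
      SimpleGraph.dist_comm (u := b) (v := d)]
  constructor
  · intro hmd
    constructor
    · intro a' ha'
      have h := hmd (a', b) ⟨fun hEq => ha'.ne (congrArg Prod.fst hEq), Or.inr ha', Or.inl rfl⟩
      rw [dist_prod hc hH, e0] at h
      omega
    · intro b' hb'
      have h := hmd (a, b') ⟨fun hEq => hb'.ne (congrArg Prod.snd hEq), Or.inl rfl, Or.inr hb'⟩
      rw [dist_prod hc hH, e0] at h
      omega
  · rintro ⟨hA, hB⟩ ⟨a', b'⟩ ⟨-, h1, h2⟩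
    rw [dist_prod hc hH, e0]
    have k1 : G.dist c a' ≤ max (G.dist c a) (H.dist d b) := by
      rcases h1 with heq | hadj
      · simp only at heq; rw [← heq]; omega
      · exact hA a' hadj
    have k2 : H.dist d b' ≤ max (G.dist c a) (H.dist d b) := by
      rcases h2 with heq | hadj
      · simp only at heq; rw [← heq]; omega
      · exact hB b' hadj
    omega

end Prod
section Tree
variable {G : SimpleGraph α} [DecidableRel G.Adj] [Fintype α]

lemma leaf_close (hT : G.IsTree) {a c : α} (hne : a ≠ c) (hdeg : G.degree a = 1) :
    ∀ a', G.Adj a a' → G.dist c a' + 1 ≤ G.dist c a := by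
  have hc := hT.isConnected
  obtain ⟨p, hp, hl⟩ := hc.exists_path_of_dist a c
  cases p with
  | nil => exact absurd rfl hne
  | @cons a p₀ c h q =>
    intro a' ha'
    have huniq : ∃ x, G.neighborFinset a = {x} := Finset.card_eq_one.mp (by
      rwa [SimpleGraph.card_neighborFinset_eq_degree])
    obtain ⟨x, hx⟩ := huniq
    have h1 : a' = x := by
      have := (SimpleGraph.mem_neighborFinset G a a').mpr ha'
      rw [hx, Finset.mem_singleton] at this; exact this
    have h2 : p₀ = x := by
      have := (SimpleGraph.mem_neighborFinset G a p₀).mpr h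
      rw [hx, Finset.mem_singleton] at this; exact this
    have hpc : p₀ = a' := by rw [h1, h2]
    rw [← hpc]
    have hd : G.dist p₀ c ≤ q.length := SimpleGraph.dist_le q
    have e1 : G.dist c p₀ = G.dist p₀ c := SimpleGraph.dist_comm ..
    have e2 : G.dist c a = G.dist a c := SimpleGraph.dist_comm ..
    simp only [SimpleGraph.Walk.length_cons] at hl
    omega

lemma nonleaf_far (hT : G.IsTree) {a c : α} (hdeg : G.degree a ≠ 1) (hpos : 0 < G.degree a) :
    ∃ a', G.Adj a a' ∧ G.dist c a' = G.dist c a + 1 := by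
  classical
  have hc := hT.isConnected
  by_cases hne : a = c
  · subst hne
    obtain ⟨a', ha'⟩ := (SimpleGraph.degree_pos_iff_exists_adj (G := G) a).mp hpos
    refine ⟨a', ha', ?_⟩
    rw [SimpleGraph.dist_self]
    simpa using (SimpleGraph.dist_eq_one_iff_adj).mpr ha'
  · obtain ⟨p, hp, hl⟩ := hc.exists_path_of_dist a c
    cases p with
    | nil => exact absurd rfl hne
    | @cons a p₀ c h q =>
      obtain ⟨a', ha'mem, ha'ne⟩ := Finset.exists_mem_ne (s := G.neighborFinset a)
        (by rw [SimpleGraph.card_neighborFinset_eq_degree]; omega) p₀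
      have hadj : G.Adj a a' := (SimpleGraph.mem_neighborFinset G a a').mp ha'mem
      refine ⟨a', hadj, ?_⟩
      have hub : G.dist c a' ≤ G.dist c a + 1 := dist_adj_le hc hadj c
      by_contra hgoal
      have hle : G.dist c a' ≤ G.dist c a := by omega
      obtain ⟨R, hR, hRl⟩ := hc.exists_path_of_dist a' c
      have haR : a ∉ R.support := by
        intro hmem
        have hsplit := congrArg SimpleGraph.Walk.length (R.take_spec hmem)
        rw [SimpleGraph.Walk.length_append] at hsplit
        have h1 : G.dist a c ≤ (R.dropUntil a hmem).length := SimpleGraph.dist_le _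
        have h2 : 1 ≤ (R.takeUntil a hmem).length := by
          rcases Nat.eq_zero_or_pos (R.takeUntil a hmem).length with h0 | h0
          · exact absurd (SimpleGraph.Walk.eq_of_length_eq_zero h0) hadj.ne'
          · exact h0
        have e1 : G.dist a' c = G.dist c a' := SimpleGraph.dist_comm ..
        have e2 : G.dist a c = G.dist c a := SimpleGraph.dist_comm ..
        omega
      have hpath2 : (SimpleGraph.Walk.cons hadj R).IsPath :=
        (SimpleGraph.Walk.cons_isPath_iff hadj R).mpr ⟨hR, haR⟩
      have hEq := (hT.existsUnique_path a c).unique hpath2 hp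
      have hsup := congrArg SimpleGraph.Walk.support hEq
      rw [SimpleGraph.Walk.support_cons, SimpleGraph.Walk.support_cons,
        R.support_eq_cons, q.support_eq_cons] at hsup
      simp only [List.cons.injEq] at hsup
      exact ha'ne hsup.2.1

lemma exists_leaf (hT : G.IsTree) (hcard : 2 ≤ Fintype.card α) (r : α) :
    ∃ x, G.degree x = 1 ∧ 0 < G.dist r x := by
  have hc := hT.isConnected
  obtain ⟨x, -, hmax⟩ := Finset.exists_max_image Finset.univ (fun x => G.dist r x)
    ⟨r, Finset.mem_univ r⟩
  obtain ⟨y, hy⟩ := Fintype.exists_ne_of_one_lt_card (by omega) r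
  have hypos : 0 < G.dist r y := (hc r y).pos_dist_of_ne (Ne.symm hy)
  have hxpos : 0 < G.dist r x := lt_of_lt_of_le hypos (hmax y (Finset.mem_univ y))
  have hxr : x ≠ r := fun h => by rw [h, SimpleGraph.dist_self] at hxpos; omega
  have hdpos : 0 < G.degree x := by
    rw [SimpleGraph.degree_pos_iff_exists_adj (G := G)]
    obtain ⟨x', hadj, -⟩ := exists_adj_near hc hxr
    exact ⟨x', hadj⟩
  refine ⟨x, ?_, hxpos⟩
  by_contra hdeg
  obtain ⟨x', -, hfar⟩ := nonleaf_far hT hdeg hdpos (c := r)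
  have := hmax x' (Finset.mem_univ x')
  omega

end Tree
section Edges
variable {G : SimpleGraph α} [DecidableRel G.Adj] [Fintype α] {H : SimpleGraph β}

lemma sr_adj_same_b (hT : G.IsTree) (hH : H.Connected) {a c : α} (b : β)
    (hne : a ≠ c) (ha : G.degree a = 1) (hcdeg : G.degree c = 1) :
    (strongResolvingGraph (strongProd G H)).Adj (a, b) (c, b) := by
  have hc := hT.isConnected
  have hD1 : 0 < G.dist c a := (hc c a).pos_dist_of_ne (Ne.symm hne)
  have hD1' : 0 < G.dist a c := (hc a c).pos_dist_of_ne hne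
  refine ⟨fun hEq => hne (congrArg Prod.fst hEq), ?_, ?_⟩
  · refine (mdProd_iff hc hH).mpr ⟨?_, ?_⟩
    · intro a' ha'; have := leaf_close hT hne ha a' ha'; omega
    · intro b' hb'
      have h1 : H.dist b b' ≤ 1 := SimpleGraph.dist_le hb'.toWalk
      omega
  · refine (mdProd_iff hc hH).mpr ⟨?_, ?_⟩
    · intro c' hc'; have := leaf_close hT (Ne.symm hne) hcdeg c' hc'; omega
    · intro b' hb'
      have h1 : H.dist b b' ≤ 1 := SimpleGraph.dist_le hb'.toWalk
      omega

lemma sr_adj_fiber (hT : G.IsTree) (hH : H.Connected) (a : α) {b d : β} (hbd : b ≠ d)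
    (hm : MutuallyMaximallyDistant H b d) :
    (strongResolvingGraph (strongProd G H)).Adj (a, b) (a, d) := by
  have hc := hT.isConnected
  have hD2 : 0 < H.dist d b := (hH d b).pos_dist_of_ne (Ne.symm hbd)
  have hD2' : 0 < H.dist b d := (hH b d).pos_dist_of_ne hbd
  have e2 : H.dist b d = H.dist d b := SimpleGraph.dist_comm ..
  refine ⟨fun hEq => hbd (congrArg Prod.snd hEq), ?_, ?_⟩
  · refine (mdProd_iff hc hH).mpr ⟨?_, ?_⟩
    · intro a' ha'
      have h1 : G.dist a a' ≤ 1 := SimpleGraph.dist_le ha'.toWalk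
      omega
    · intro b' hb'; have := hm.1 b' hb'; omega
  · refine (mdProd_iff hc hH).mpr ⟨?_, ?_⟩
    · intro a' ha'
      have h1 : G.dist a a' ≤ 1 := SimpleGraph.dist_le ha'.toWalk
      omega
    · intro d' hd'; have := hm.2 d' hd'; omega

lemma sr_adj_cross (hT : G.IsTree) (hH : H.Connected) {a c : α} {b d : β}
    (hne : a ≠ c) (ha : G.degree a = 1) (hcdeg : G.degree c = 1) (hbd : b ≠ d)
    (hm : MutuallyMaximallyDistant H b d) :
    (strongResolvingGraph (strongProd G H)).Adj (a, b) (c, d) := by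
  have hc := hT.isConnected
  have e2 : H.dist b d = H.dist d b := SimpleGraph.dist_comm ..
  refine ⟨fun hEq => hne (congrArg Prod.fst hEq), ?_, ?_⟩
  · refine (mdProd_iff hc hH).mpr ⟨?_, ?_⟩
    · intro a' ha'; have := leaf_close hT hne ha a' ha'; omega
    · intro b' hb'; have := hm.1 b' hb'; omega
  · refine (mdProd_iff hc hH).mpr ⟨?_, ?_⟩
    · intro c' hc'; have := leaf_close hT (Ne.symm hne) hcdeg c' hc'; omega
    · intro d' hd'; have := hm.2 d' hd'; omega

lemma mmd_fiber_rev (hc : G.Connected) (hH : H.Connected) {a : α} {b d : β}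
    (h : MutuallyMaximallyDistant (strongProd G H) (a, b) (a, d)) :
    MutuallyMaximallyDistant H b d := by
  obtain ⟨h1, h2⟩ := h
  rw [mdProd_iff hc hH] at h1 h2
  have e0 : G.dist a a = 0 := SimpleGraph.dist_self
  have e2 : H.dist b d = H.dist d b := SimpleGraph.dist_comm ..
  constructor
  · intro w hw; have := h1.2 w hw; omega
  · intro w hw; have := h2.2 w hw; omega

lemma mmd_nonleaf_rev (hT : G.IsTree) (hH : H.Connected) {a c : α} {b d : β}
    (hne : a ≠ c) (hdeg : G.degree a ≠ 1) (hpos : 0 < G.degree a)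
    (h : MutuallyMaximallyDistant (strongProd G H) (a, b) (c, d)) :
    b ≠ d ∧ MutuallyMaximallyDistant H b d := by
  have hc := hT.isConnected
  obtain ⟨h1, h2⟩ := h
  rw [mdProd_iff hc hH] at h1 h2
  obtain ⟨a', hadj, hfar⟩ := nonleaf_far hT hdeg hpos (c := c)
  have hD1 : 0 < G.dist c a := (hc c a).pos_dist_of_ne (fun hEq => hne hEq.symm)
  have hgt : G.dist c a + 1 ≤ H.dist d b := by
    have := h1.1 a' hadj; omega
  have e1 : G.dist a c = G.dist c a := SimpleGraph.dist_comm ..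
  have e2 : H.dist b d = H.dist d b := SimpleGraph.dist_comm ..
  refine ⟨?_, ?_, ?_⟩
  · intro hEq; rw [hEq, SimpleGraph.dist_self] at hgt; omega
  · intro w hw; have := h1.2 w hw; omega
  · intro w hw; have := h2.2 w hw; omega

end Edges
section Count
variable {γ : Type*}

lemma indepNum_bddAbove [Fintype γ] (G' : SimpleGraph γ) :
    BddAbove {n | ∃ s : Finset γ, IsIndepFinset G' s ∧ s.card = n} := by
  refine ⟨Fintype.card γ, ?_⟩
  rintro n ⟨s, -, rfl⟩
  exact s.card_le_univ.trans_eq Finset.card_univ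

lemma indep_le_indepNum [Fintype γ] {G' : SimpleGraph γ} {s : Finset γ}
    (h : IsIndepFinset G' s) : s.card ≤ _root_.indepNum G' :=
  le_csSup (indepNum_bddAbove G') ⟨s, h, rfl⟩

lemma exists_max_indep [Fintype γ] (G' : SimpleGraph γ) :
    ∃ s : Finset γ, IsIndepFinset G' s ∧ s.card = _root_.indepNum G' := by
  have hne : {n | ∃ s : Finset γ, IsIndepFinset G' s ∧ s.card = n}.Nonempty :=
    ⟨0, ∅, fun u hu => absurd hu (by simp), rfl⟩
  exact Nat.sSup_mem hne (indepNum_bddAbove G')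

variable {G : SimpleGraph α} [DecidableRel G.Adj] [Fintype α] {H : SimpleGraph β} [Fintype β]

lemma indep_card_le (hT : G.IsTree) (hH : H.Connected)
    {A : Finset (α × β)} (hA : IsIndepFinset (strongResolvingGraph (strongProd G H)) A) :
    A.card ≤ ((Finset.univ.filter fun v => G.degree v ≠ 1).card + 1) *
      _root_.indepNum (strongResolvingGraph H) := by
  classical
  set αH := _root_.indepNum (strongResolvingGraph H) with hαH
  -- fiber bound
  have fiber_bound : ∀ a : α, (A.filter (fun x => x.1 = a)).card ≤ αH := by
    intro a
    set F := A.filter (fun x => x.1 = a) with hF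
    have hinj : Set.InjOn (Prod.snd : α × β → β) ↑F := by
      intro x hx y hy hxy
      simp only [hF, Finset.coe_filter, Set.mem_setOf_eq] at hx hy
      exact Prod.ext (hx.2.trans hy.2.symm) hxy
    have hcard : F.card = (F.image Prod.snd).card := (Finset.card_image_of_injOn hinj).symm
    have hindep : IsIndepFinset (strongResolvingGraph H) (F.image Prod.snd) := by
      intro b hb d hd hbd hadj
      obtain ⟨x, hx, hxb⟩ := Finset.mem_image.mp hb
      obtain ⟨y, hy, hyd⟩ := Finset.mem_image.mp hd
      simp only [hF, Finset.mem_filter] at hx hy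
      have hx1 : x = (a, b) := Prod.ext hx.2 hxb
      have hy1 : y = (a, d) := Prod.ext hy.2 hyd
      have hedge := sr_adj_fiber hT hH a hbd hadj.2
      exact hA x hx.1 y hy.1 (by rw [hx1, hy1]; exact fun h => hbd (congrArg Prod.snd h))
        (by rw [hx1, hy1]; exact hedge)
    rw [hcard]
    exact indep_le_indepNum hindep
  -- non-leaf part
  set NL := (Finset.univ.filter fun v : α => G.degree v ≠ 1) with hNL
  set A0 := A.filter (fun x => G.degree x.1 ≠ 1) with hA0
  set AL := A.filter (fun x => G.degree x.1 = 1) with hAL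
  have hA0card : A0.card ≤ NL.card * αH := by
    have hmap : ∀ x ∈ A0, x.1 ∈ NL := by
      intro x hx
      simp only [hA0, Finset.mem_filter] at hx
      simp [hNL, hx.2]
    rw [Finset.card_eq_sum_card_fiberwise hmap]
    calc ∑ a ∈ NL, (A0.filter (fun x => x.1 = a)).card
        ≤ ∑ a ∈ NL, αH := by
          refine Finset.sum_le_sum fun a _ => ?_
          refine le_trans (Finset.card_le_card ?_) (fiber_bound a)
          intro x hx
          simp only [hA0, Finset.mem_filter] at hx ⊢
          exact ⟨hx.1.1, hx.2⟩
      _ = NL.card * αH := by rw [Finset.sum_const, smul_eq_mul]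
  have hALcard : AL.card ≤ αH := by
    have hinj : Set.InjOn (Prod.snd : α × β → β) ↑AL := by
      intro x hx y hy hxy
      simp only [hAL, Finset.coe_filter, Set.mem_setOf_eq] at hx hy
      by_contra hne
      have hfst : x.1 ≠ y.1 := fun h => hne (Prod.ext h hxy)
      have hedge := sr_adj_same_b hT hH x.2 hfst hx.2 hy.2
      have : (strongResolvingGraph (strongProd G H)).Adj x y := by
        have hx' : x = (x.1, x.2) := rfl
        have hy' : y = (y.1, x.2) := by rw [Prod.ext_iff]; exact ⟨rfl, hxy.symm⟩
        rw [hx', hy']; exact hedge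
      exact hA x hx.1 y hy.1 (fun h => hne h) this
    have hcard : AL.card = (AL.image Prod.snd).card := (Finset.card_image_of_injOn hinj).symm
    have hindep : IsIndepFinset (strongResolvingGraph H) (AL.image Prod.snd) := by
      intro b hb d hd hbd hadj
      obtain ⟨x, hx, hxb⟩ := Finset.mem_image.mp hb
      obtain ⟨y, hy, hyd⟩ := Finset.mem_image.mp hd
      simp only [hAL, Finset.mem_filter] at hx hy
      have hxy : x ≠ y := fun h => hbd (by rw [← hxb, ← hyd, h])
      refine hA x hx.1 y hy.1 hxy ?_
      have hx1 : x = (x.1, b) := Prod.ext rfl hxb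
      have hy1 : y = (y.1, d) := Prod.ext rfl hyd
      by_cases hfst : x.1 = y.1
      · have hedge := sr_adj_fiber hT hH x.1 hbd hadj.2
        rw [hx1, hy1, ← hfst]; exact hedge
      · have hedge := sr_adj_cross hT hH hfst hx.2 hy.2 hbd hadj.2
        rw [hx1, hy1]; exact hedge
    rw [hcard]
    exact indep_le_indepNum hindep
  have hdisj : Disjoint AL A0 := by
    rw [Finset.disjoint_left]
    intro x hx hx'
    rw [hAL, Finset.mem_filter] at hx
    rw [hA0, Finset.mem_filter] at hx'
    exact hx'.2 hx.2
  have hunion : AL ∪ A0 = A := by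
    ext x
    rw [Finset.mem_union, hAL, hA0, Finset.mem_filter, Finset.mem_filter]
    tauto
  have hsplit : AL.card + A0.card = A.card := by
    rw [← Finset.card_union_of_disjoint hdisj, hunion]
  calc A.card = AL.card + A0.card := hsplit.symm
    _ ≤ αH + NL.card * αH := Nat.add_le_add hALcard hA0card
    _ = (NL.card + 1) * αH := by ring

lemma indep_card_ge (hT : G.IsTree) (hH : H.Connected) (hcard : 2 ≤ Fintype.card α)
    {x₀ : α} (hx₀ : G.degree x₀ = 1) :
    ((Finset.univ.filter fun v => G.degree v ≠ 1).card + 1) *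
      _root_.indepNum (strongResolvingGraph H) ≤
      _root_.indepNum (strongResolvingGraph (strongProd G H)) := by
  classical
  have hc := hT.isConnected
  have hdegpos : ∀ a : α, 0 < G.degree a := by
    intro a
    obtain ⟨y, hy⟩ := Fintype.exists_ne_of_one_lt_card (by omega) a
    obtain ⟨a', hadj, -⟩ := exists_adj_near hc (Ne.symm hy)
    rw [SimpleGraph.degree_pos_iff_exists_adj (G := G)]
    exact ⟨a', hadj⟩
  obtain ⟨I₀, hI₀, hI₀card⟩ := exists_max_indep (strongResolvingGraph H)
  set NL := (Finset.univ.filter fun v : α => G.degree v ≠ 1) with hNL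
  set S := (NL ∪ {x₀}) ×ˢ I₀ with hS
  have hx₀NL : x₀ ∉ NL := by simp [hNL, hx₀]
  have hScard : S.card = (NL.card + 1) * _root_.indepNum (strongResolvingGraph H) := by
    rw [hS, Finset.card_product, Finset.card_union_of_disjoint (by simpa using hx₀NL),
      Finset.card_singleton, hI₀card]
  have hSindep : IsIndepFinset (strongResolvingGraph (strongProd G H)) S := by
    rintro ⟨a, b⟩ hab ⟨c, d⟩ hcd hne hadj
    rw [hS, Finset.mem_product] at hab hcd
    obtain ⟨hneq, hmmd⟩ := hadj
    by_cases hac : a = c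
    · subst hac
      have hbd : b ≠ d := fun h => hneq (by rw [h])
      have := mmd_fiber_rev hc hH hmmd
      exact hI₀ b hab.2 d hcd.2 hbd ⟨hbd, this⟩
    · by_cases hda : G.degree a = 1
      · have hax : a = x₀ := by
          rcases Finset.mem_union.mp hab.1 with h | h
          · exact absurd h (by simp [hNL, hda])
          · exact Finset.mem_singleton.mp h
        by_cases hdc : G.degree c = 1
        · have hcx : c = x₀ := by
            rcases Finset.mem_union.mp hcd.1 with h | h
            · exact absurd h (by simp [hNL, hdc])
            · exact Finset.mem_singleton.mp h
          exact hac (hax.trans hcx.symm)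
        · obtain ⟨hbd, hmm⟩ := mmd_nonleaf_rev hT hH (Ne.symm hac) hdc (hdegpos c)
            ⟨hmmd.2, hmmd.1⟩
          exact hI₀ d hcd.2 b hab.2 hbd ⟨hbd, hmm⟩
      · obtain ⟨hbd, hmm⟩ := mmd_nonleaf_rev hT hH hac hda (hdegpos a) hmmd
        exact hI₀ b hab.2 d hcd.2 hbd ⟨hbd, hmm⟩
  calc (NL.card + 1) * _root_.indepNum (strongResolvingGraph H) = S.card := hScard.symm
    _ ≤ _ := indep_le_indepNum hSindep

end Count

theorem sdim_strongProd_tree [Fintype α] [Fintype β]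
    (G : SimpleGraph α) [DecidableRel G.Adj] (hT : G.IsTree) (hGn : 2 ≤ Fintype.card α)
    (H : SimpleGraph β) (hH : H.Connected) (hHn : Nontrivial β) :
    sdim (strongProd G H) =
      Fintype.card β * ((Finset.univ.filter fun v => G.degree v = 1).card - 1) +
        Fintype.card α * sdim H -
        ((Finset.univ.filter fun v => G.degree v = 1).card - 1) * sdim H := by
  classical
  have hc := hT.isConnected
  obtain ⟨x₀, hx₀, -⟩ := exists_leaf hT hGn hc.nonempty.some
  set L := (Finset.univ.filter fun v : α => G.degree v = 1) with hL
  set NL := (Finset.univ.filter fun v : α => G.degree v ≠ 1) with hNL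
  have hLNL : L.card + NL.card = Fintype.card α := by
    have hdisj : Disjoint L NL := by
      rw [Finset.disjoint_left]
      intro x h h'
      rw [hL, Finset.mem_filter] at h
      rw [hNL, Finset.mem_filter] at h'
      exact h'.2 h.2
    have huni : L ∪ NL = Finset.univ := by
      ext x
      rw [Finset.mem_union, hL, hNL, Finset.mem_filter, Finset.mem_filter]
      simp only [Finset.mem_univ, true_and, true_iff]
      tauto
    rw [← Finset.card_univ, ← huni, Finset.card_union_of_disjoint hdisj]
  have hx₀L : x₀ ∈ L := by rw [hL, Finset.mem_filter]; exact ⟨Finset.mem_univ x₀, hx₀⟩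
  have hl1 : 0 < L.card := Finset.card_pos.mpr ⟨x₀, hx₀L⟩
  have hup : _root_.indepNum (strongResolvingGraph (strongProd G H)) ≤
      (NL.card + 1) * _root_.indepNum (strongResolvingGraph H) := by
    apply csSup_le
    · exact ⟨0, ∅, fun u hu => absurd hu (by simp), rfl⟩
    · rintro n ⟨A, hA, rfl⟩
      exact indep_card_le hT hH hA
  have hlo := indep_card_ge hT hH hGn hx₀
  have hPD : _root_.indepNum (strongResolvingGraph (strongProd G H)) =
      (NL.card + 1) * _root_.indepNum (strongResolvingGraph H) := le_antisymm hup hlo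
  have hA1 := sdim_add_indepNum (prod_connected hc hH)
  have hA2 := sdim_add_indepNum hH
  rw [hPD, Fintype.card_prod] at hA1
  obtain ⟨m, hm⟩ : ∃ m, L.card = m + 1 := ⟨L.card - 1, by omega⟩
  rw [hm]
  simp only [Nat.add_sub_cancel]
  set s := sdim H with hs
  set aH := _root_.indepNum (strongResolvingGraph H) with haH
  set n1 := Fintype.card α with hn1d
  set n2 := Fintype.card β with hn2d
  have hn1 : n1 = NL.card + m + 1 := by omega
  have hn2 : n2 = s + aH := by omega
  have key : sdim (strongProd G H) + m * s = n2 * m + n1 * s := by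
    apply Nat.add_right_cancel (m := (NL.card + 1) * aH)
    calc sdim (strongProd G H) + m * s + (NL.card + 1) * aH
        = sdim (strongProd G H) + (NL.card + 1) * aH + m * s := by ring
      _ = n1 * n2 + m * s := by rw [hA1]
      _ = n2 * m + n1 * s + (NL.card + 1) * aH := by rw [hn1, hn2]; ring
  exact Nat.eq_sub_of_add_eq key
end

section
/- For all integers r, t with 1 ≤ r ≤ t, the strong metric dimension of the strong product of the odd cycles C_{2r+1} and C_{2t+1} satisfies 3rt + 2r + 2t + 1 − ⌊r/2⌋ ≤ dim_s(C_{2r+1} ⊠ C_{2t+1}) ≤ 3rt + 2r + 2t + 1. -/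
open SimpleGraph Finset

variable {α β : Type*}

section Aux

variable {V W : Type*}

/-- cyclic distance on `Fin n`. -/
def cd (n : ℕ) (u v : Fin n) : ℕ := min (u - v).val (v - u).val

lemma fin_sub_val {n : ℕ} (u v : Fin n) :
    (u - v).val = if v.val ≤ u.val then u.val - v.val else n - v.val + u.val := by
  rw [Fin.sub_def]
  show (n - v.val + u.val) % n = _
  have hu := u.isLt; have hv := v.isLt
  rcases le_or_gt v.val u.val with h | h
  · rw [if_pos h]
    have : n - v.val + u.val = (u.val - v.val) + n := by omega
    rw [this, Nat.add_mod_right, Nat.mod_eq_of_lt (by omega)]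
  · rw [if_neg (by omega), Nat.mod_eq_of_lt (by omega)]

lemma fin_add_val {n : ℕ} (u v : Fin n) : (u + v).val = (u.val + v.val) % n := by
  rw [Fin.add_def]

lemma cd_comm (n : ℕ) (u v : Fin n) : cd n u v = cd n v u := min_comm _ _

lemma cd_self (n : ℕ) (u : Fin n) : cd n u u = 0 := by
  have hu := u.isLt
  simp [cd, fin_sub_val]

lemma cd_eq_zero_iff {n : ℕ} {u v : Fin n} : cd n u v = 0 ↔ u = v := by
  have hu := u.isLt; have hv := v.isLt
  rw [cd, fin_sub_val, fin_sub_val, Fin.ext_iff]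
  split_ifs <;> omega

lemma cd_le {k : ℕ} (u v : Fin (2 * k + 1)) : cd (2 * k + 1) u v ≤ k := by
  have hu := u.isLt; have hv := v.isLt
  rw [cd, fin_sub_val, fin_sub_val]
  split_ifs <;> omega

lemma cd_lipschitz {k : ℕ} {x y : Fin (2 * k + 1)} (h : (cycleGraph (2 * k + 1)).Adj x y)
    (z : Fin (2 * k + 1)) : cd (2 * k + 1) z y ≤ cd (2 * k + 1) z x + 1 := by
  rw [cycleGraph_adj'] at h
  have hx := x.isLt; have hy := y.isLt; have hz := z.isLt
  rw [fin_sub_val, fin_sub_val] at h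
  rw [cd, cd, fin_sub_val, fin_sub_val, fin_sub_val, fin_sub_val]
  rcases h with h | h <;> split_ifs at h ⊢ <;> omega

lemma cd_def (n : ℕ) (u v : Fin n) : cd n u v = min (u - v).val (v - u).val := rfl

lemma cycle_connected (k : ℕ) : (cycleGraph (2 * k + 1)).Connected :=
  cycleGraph_connected

lemma dist_le_sub_val {k : ℕ} (hk : 1 ≤ k) :
    ∀ (j : ℕ) (u v : Fin (2 * k + 1)), (u - v).val = j → (cycleGraph (2 * k + 1)).dist u v ≤ j := by
  intro j
  induction j with
  | zero =>
    intro u v h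
    rw [fin_sub_val] at h
    have hu := u.isLt; have hv := v.isLt
    have : u = v := Fin.ext (by split_ifs at h <;> omega)
    rw [this, SimpleGraph.dist_self]
  | succ j ih =>
    intro u v h
    set e : Fin (2 * k + 1) := ⟨1, by omega⟩ with he
    set u' : Fin (2 * k + 1) := u - e with hu'
    have hu := u.isLt; have hv := v.isLt
    have hu'v : u'.val = if 1 ≤ u.val then u.val - 1 else 2 * k := by
      rw [hu', fin_sub_val]; simp only [he]; split_ifs <;> omega
    have hadj : (cycleGraph (2 * k + 1)).Adj u u' := by
      rw [cycleGraph_adj']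
      left
      rw [fin_sub_val, hu'v]
      split_ifs <;> omega
    have hstep : (u' - v).val = j := by
      rw [fin_sub_val] at h ⊢
      rw [hu'v]
      split_ifs at h ⊢ <;> omega
    have h1 : (cycleGraph (2 * k + 1)).dist u u' = 1 := SimpleGraph.dist_eq_one_iff_adj.mpr hadj
    have := (cycle_connected k).dist_triangle (u := u) (v := u') (w := v)
    have := ih u' v hstep
    omega

lemma cd_le_walk {k : ℕ} : ∀ {u v : Fin (2 * k + 1)} (p : (cycleGraph (2 * k + 1)).Walk u v),
    cd (2 * k + 1) u v ≤ p.length := by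
  intro u v p
  induction p with
  | nil => simp [cd_self]
  | @cons a b c h q ih =>
    have : cd (2 * k + 1) a c ≤ cd (2 * k + 1) b c + 1 := by
      rw [cd_comm _ a c, cd_comm _ b c]
      exact cd_lipschitz h.symm c
    rw [SimpleGraph.Walk.length_cons]
    omega

lemma dist_cycle {k : ℕ} (hk : 1 ≤ k) (u v : Fin (2 * k + 1)) :
    (cycleGraph (2 * k + 1)).dist u v = cd (2 * k + 1) u v := by
  apply le_antisymm
  · rw [cd_def]
    rcases le_total (u - v).val (v - u).val with h | h
    · rw [min_eq_left h]
      exact dist_le_sub_val hk _ u v rfl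
    · rw [min_eq_right h, SimpleGraph.dist_comm]
      exact dist_le_sub_val hk _ v u rfl
  · obtain ⟨p, hp⟩ := ((cycle_connected k).preconnected u v).exists_walk_length_eq_dist
    rw [← hp]
    exact cd_le_walk p

lemma exists_step {G : SimpleGraph α} (hG : G.Connected) {a c : α} {L : ℕ}
    (h : G.dist a c ≤ L + 1) : ∃ a', (a = a' ∨ G.Adj a a') ∧ G.dist a' c ≤ L := by
  by_cases hac : a = c
  · subst hac; exact ⟨a, Or.inl rfl, by rw [SimpleGraph.dist_self]; exact Nat.zero_le _⟩
  · obtain ⟨p, hp⟩ := (hG.preconnected a c).exists_walk_length_eq_dist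
    cases p with
    | nil => exact absurd rfl hac
    | cons h' q =>
      refine ⟨_, Or.inr h', ?_⟩
      have := SimpleGraph.dist_le q
      rw [SimpleGraph.Walk.length_cons] at hp
      omega

lemma walk_of_le {G : SimpleGraph α} {H : SimpleGraph β} (hG : G.Connected) (hH : H.Connected) :
    ∀ (L : ℕ) (a c : α) (b d : β), G.dist a c ≤ L → H.dist b d ≤ L →
      ∃ p : (strongProd G H).Walk (a, b) (c, d), p.length ≤ L := by
  intro L
  induction L with
  | zero =>
    intro a c b d h1 h2
    obtain rfl : a = c := hG.dist_eq_zero_iff.mp (Nat.le_zero.mp h1)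
    obtain rfl : b = d := hH.dist_eq_zero_iff.mp (Nat.le_zero.mp h2)
    exact ⟨.nil, by simp⟩
  | succ L ih =>
    intro a c b d h1 h2
    obtain ⟨a', ha', hda⟩ := exists_step hG h1
    obtain ⟨b', hb', hdb⟩ := exists_step hH h2
    obtain ⟨p, hp⟩ := ih a' c b' d hda hdb
    by_cases he : (a, b) = (a', b')
    · rw [Prod.mk.injEq] at he
      obtain ⟨rfl, rfl⟩ := he
      exact ⟨p, hp.trans (Nat.le_succ L)⟩
    · have adj : (strongProd G H).Adj (a, b) (a', b') := (show _ ∧ _ ∧ _ from ⟨he, ha', hb'⟩)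
      exact ⟨.cons adj p, by rw [SimpleGraph.Walk.length_cons]; omega⟩

lemma fst_dist_le {G : SimpleGraph α} {H : SimpleGraph β} (hG : G.Connected) :
    ∀ {x y : α × β} (p : (strongProd G H).Walk x y), G.dist x.1 y.1 ≤ p.length := by
  intro x y p
  induction p with
  | nil => simp
  | @cons a b c h q ih =>
    rw [SimpleGraph.Walk.length_cons]
    rcases (show _ ∧ _ ∧ _ from h).2.1 with heq | hadj
    · rw [heq]; omega
    · have t := hG.dist_triangle (u := a.1) (v := b.1) (w := c.1)
      have h1 : G.dist a.1 b.1 = 1 := SimpleGraph.dist_eq_one_iff_adj.mpr hadj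
      omega

lemma snd_dist_le {G : SimpleGraph α} {H : SimpleGraph β} (hH : H.Connected) :
    ∀ {x y : α × β} (p : (strongProd G H).Walk x y), H.dist x.2 y.2 ≤ p.length := by
  intro x y p
  induction p with
  | nil => simp
  | @cons a b c h q ih =>
    rw [SimpleGraph.Walk.length_cons]
    rcases (show _ ∧ _ ∧ _ from h).2.2 with heq | hadj
    · rw [heq]; omega
    · have t := hH.dist_triangle (u := a.2) (v := b.2) (w := c.2)
      have h1 : H.dist a.2 b.2 = 1 := SimpleGraph.dist_eq_one_iff_adj.mpr hadj
      omega

lemma strongProd_connected {G : SimpleGraph α} {H : SimpleGraph β} (hG : G.Connected)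
    (hH : H.Connected) : (strongProd G H).Connected := by
  have : Nonempty (α × β) := ⟨⟨hG.nonempty.some, hH.nonempty.some⟩⟩
  refine SimpleGraph.Connected.mk fun x y => ?_
  obtain ⟨p, _⟩ := walk_of_le hG hH (max (G.dist x.1 y.1) (H.dist x.2 y.2)) x.1 y.1 x.2 y.2
    (le_max_left _ _) (le_max_right _ _)
  exact ⟨p⟩

lemma strongProd_dist {G : SimpleGraph α} {H : SimpleGraph β} (hG : G.Connected)
    (hH : H.Connected) (x y : α × β) :
    (strongProd G H).dist x y = max (G.dist x.1 y.1) (H.dist x.2 y.2) := by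
  apply le_antisymm
  · obtain ⟨p, hp⟩ := walk_of_le hG hH (max (G.dist x.1 y.1) (H.dist x.2 y.2)) x.1 y.1 x.2 y.2
      (le_max_left _ _) (le_max_right _ _)
    exact (SimpleGraph.dist_le p).trans hp
  · obtain ⟨q, hq⟩ := (((strongProd_connected hG hH).preconnected) x y).exists_walk_length_eq_dist
    rw [← hq]
    exact max_le (fst_dist_le hG q) (snd_dist_le hH q)

lemma resolve_half {G : SimpleGraph α} (hG : G.Connected) {u v w : α}
    (hvu : MaximallyDistantFrom G v u) (h : G.dist w u = G.dist w v + G.dist v u)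
    (hne : u ≠ v) : w = v := by
  by_contra hwv
  have h1 : 0 < G.dist w v := hG.pos_dist_of_ne hwv
  have h2 : G.dist v w ≤ (G.dist w v - 1) + 1 := by
    rw [SimpleGraph.dist_comm]; omega
  obtain ⟨x, hx, hdx⟩ := exists_step hG h2
  rcases hx with rfl | hadj
  · rw [SimpleGraph.dist_comm] at hdx; omega
  · have t1 := hG.dist_triangle (u := w) (v := x) (w := u)
    have t2 : G.dist u x ≤ G.dist v u := hvu x hadj
    have c2 : G.dist x u = G.dist u x := SimpleGraph.dist_comm ..
    have c3 : G.dist w x = G.dist x w := SimpleGraph.dist_comm ..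
    omega

lemma resolve_endpoint {G : SimpleGraph α} (hG : G.Connected) {u v w : α}
    (hu : MaximallyDistantFrom G u v) (hv : MaximallyDistantFrom G v u) (hne : u ≠ v)
    (hw : StronglyResolves G w u v) : w = u ∨ w = v := by
  rcases hw with h | h
  · exact Or.inr (resolve_half hG hv h hne)
  · exact Or.inl (resolve_half hG hu h hne.symm)

lemma strongProd_dist_cycle {r t : ℕ} (hr : 1 ≤ r) (ht : 1 ≤ t)
    (x y : Fin (2 * r + 1) × Fin (2 * t + 1)) :
    (strongProd (cycleGraph (2 * r + 1)) (cycleGraph (2 * t + 1))).dist x y =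
      max (cd (2 * r + 1) x.1 y.1) (cd (2 * t + 1) x.2 y.2) := by
  rw [strongProd_dist (cycle_connected r) (cycle_connected t), dist_cycle hr, dist_cycle ht]

lemma concreteMD {r t : ℕ} (hr : 1 ≤ r) (hrt : r ≤ t)
    (u v : Fin (2 * r + 1) × Fin (2 * t + 1))
    (cond : cd (2 * t + 1) u.2 v.2 = t ∨
      (cd (2 * r + 1) u.1 v.1 = r ∧ cd (2 * t + 1) u.2 v.2 < r)) :
    MaximallyDistantFrom (strongProd (cycleGraph (2 * r + 1)) (cycleGraph (2 * t + 1))) u v := by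
  have ht : 1 ≤ t := hr.trans hrt
  intro w hadj
  obtain ⟨hne, h1, h2⟩ : _ ∧ _ ∧ _ := hadj
  rw [strongProd_dist_cycle hr ht, strongProd_dist_cycle hr ht]
  have b1 : cd (2 * r + 1) v.1 w.1 ≤ r := cd_le _ _
  have b4 : cd (2 * t + 1) v.2 w.2 ≤ t := cd_le _ _
  have b2 : cd (2 * r + 1) v.1 u.1 ≤ r := cd_le _ _
  have b3 : cd (2 * t + 1) v.2 u.2 ≤ t := cd_le _ _
  have L1 : cd (2 * r + 1) v.1 w.1 ≤ cd (2 * r + 1) v.1 u.1 + 1 := by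
    rcases h1 with he | ha
    · rw [← he]; omega
    · exact cd_lipschitz ha v.1
  have L2 : cd (2 * t + 1) v.2 w.2 ≤ cd (2 * t + 1) v.2 u.2 + 1 := by
    rcases h2 with he | ha
    · rw [← he]; omega
    · exact cd_lipschitz ha v.2
  rw [cd_comm _ u.1 v.1, cd_comm _ u.2 v.2] at cond
  rcases cond with hc | ⟨hc1, hc2⟩
  · rw [cd_comm _ u.1 v.1, cd_comm _ u.2 v.2, hc, max_eq_right (le_trans b2 hrt)]
    exact max_le (le_trans b1 hrt) b4
  · rw [cd_comm _ u.1 v.1, cd_comm _ u.2 v.2, hc1, max_eq_left (le_of_lt hc2)]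
    exact max_le b1 (by omega)

lemma kset_bound {k : ℕ} (hk : 1 ≤ k) (T : Finset (Fin (2 * k + 1)))
    (hT : ∀ x ∈ T, ∀ y ∈ T, x ≠ y → cd (2 * k + 1) x y ≠ k) : T.card ≤ k := by
  set kf : Fin (2 * k + 1) := ⟨k, by omega⟩ with hkf
  have key : ∀ x : Fin (2 * k + 1), cd (2 * k + 1) x (x + kf) = k := by
    intro x
    have hx := x.isLt
    have hadd : (x + kf).val = (x.val + k) % (2 * k + 1) := by rw [fin_add_val]
    rw [cd_def, fin_sub_val, fin_sub_val, hadd]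
    rcases lt_or_ge (x.val + k) (2 * k + 1) with h | h
    · rw [Nat.mod_eq_of_lt h]; split_ifs <;> omega
    · rw [show x.val + k = (x.val + k - (2 * k + 1)) + (2 * k + 1) by omega,
        Nat.add_mod_right, Nat.mod_eq_of_lt (by omega)]
      split_ifs <;> omega
  have himg : T.image (· + kf) ⊆ univ \ T := by
    intro y hy
    simp only [Finset.mem_image] at hy
    obtain ⟨x, hx, rfl⟩ := hy
    rw [Finset.mem_sdiff]
    refine ⟨Finset.mem_univ _, fun hmem => ?_⟩
    have hxy : x ≠ x + kf := by
      intro he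
      have h0 := key x
      rw [← he, cd_self] at h0
      omega
    exact hT x hx _ hmem hxy (key x)
  have hinj : Function.Injective (· + kf) := add_left_injective kf
  have hcard : T.card = (T.image (· + kf)).card := (Finset.card_image_of_injective T hinj).symm
  have hle := Finset.card_le_card himg
  rw [Finset.card_sdiff_of_subset (Finset.subset_univ T)] at hle
  have h2 := Finset.card_le_univ T
  have h3 : Fintype.card (Fin (2 * k + 1)) = 2 * k + 1 := Fintype.card_fin _
  have h4 : (univ : Finset (Fin (2 * k + 1))).card = Fintype.card (Fin (2 * k + 1)) :=
    Finset.card_univ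
  omega

lemma indep_bound {r t : ℕ} (hr : 1 ≤ r) (hrt : r ≤ t)
    (S : Finset (Fin (2 * r + 1) × Fin (2 * t + 1)))
    (hS : ∀ u ∈ S, ∀ v ∈ S, u ≠ v →
      ¬(cd (2 * t + 1) u.2 v.2 = t ∨
        (cd (2 * r + 1) u.1 v.1 = r ∧ cd (2 * t + 1) u.2 v.2 < r))) :
    S.card ≤ r * t := by
  classical
  have ht : 1 ≤ t := hr.trans hrt
  set C := S.image Prod.snd with hC
  have hCcard : C.card ≤ t := by
    apply kset_bound ht
    intro b hb b' hb' hne hcd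
    rw [hC, Finset.mem_image] at hb hb'
    obtain ⟨u, hu, rfl⟩ := hb
    obtain ⟨v, hv, rfl⟩ := hb'
    exact hS u hu v hv (fun he => hne (by rw [he])) (Or.inl hcd)
  have hfib : ∀ b ∈ C, (S.filter (fun p => Prod.snd p = b)).card ≤ r := by
    intro b _
    have himg : (S.filter (fun p => Prod.snd p = b)).card =
        ((S.filter (fun p => Prod.snd p = b)).image Prod.fst).card := by
      rw [Finset.card_image_of_injOn]
      intro x hx y hy hxy
      simp only [Finset.coe_filter, Set.mem_setOf_eq] at hx hy
      exact Prod.ext hxy (hx.2.trans hy.2.symm)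
    rw [himg]
    apply kset_bound hr
    intro x hx y hy hne hcd
    rw [Finset.mem_image] at hx hy
    obtain ⟨u, hu, rfl⟩ := hx
    obtain ⟨v, hv, rfl⟩ := hy
    rw [Finset.mem_filter] at hu hv
    have h2 : cd (2 * t + 1) u.2 v.2 = 0 := by
      rw [show u.2 = v.2 from hu.2.trans hv.2.symm, cd_self]
    exact hS u hu.1 v hv.1 (fun he => hne (by rw [he])) (Or.inr ⟨hcd, by omega⟩)
  calc S.card = ∑ b ∈ C, (S.filter (fun p => Prod.snd p = b)).card :=
        Finset.card_eq_sum_card_fiberwise (fun x hx => Finset.mem_image_of_mem Prod.snd hx)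
    _ ≤ ∑ _b ∈ C, r := Finset.sum_le_sum hfib
    _ = C.card * r := by rw [Finset.sum_const, smul_eq_mul]
    _ ≤ t * r := Nat.mul_le_mul_right r hCcard
    _ = r * t := Nat.mul_comm _ _

lemma card_filter_val_lt {n k : ℕ} (h : k ≤ n) :
    (univ.filter (fun a : Fin n => a.val < k)).card = k := by
  have he : univ.filter (fun a : Fin n => a.val < k) =
      (univ : Finset (Fin k)).map (Fin.castLEEmb h) := by
    ext x
    simp only [Finset.mem_filter, Finset.mem_univ, true_and]
    constructor
    · intro hx
      refine Finset.mem_map.mpr ⟨⟨x.val, hx⟩, Finset.mem_univ _, ?_⟩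
      ext
      simp [Fin.castLEEmb, Fin.castLE]
    · intro hx
      obtain ⟨y, -, rfl⟩ := Finset.mem_map.mp hx
      simpa [Fin.castLEEmb, Fin.castLE] using y.isLt
  rw [he, Finset.card_map, Finset.card_univ, Fintype.card_fin]

lemma cd_window {k : ℕ} {x y : Fin (2 * k + 1)} (hx : x.val < k) (hy : y.val < k)
    (hxy : x.val ≤ y.val) : cd (2 * k + 1) x y = y.val - x.val := by
  rw [cd_def, fin_sub_val, fin_sub_val]
  split_ifs <;> omega

lemma cd_shift {k : ℕ} (hk : 1 ≤ k) {x y : Fin (2 * k + 1)} (hx : x.val < k) (hy : y.val < k)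
    (hxy : x.val ≤ y.val) :
    ∃ z : Fin (2 * k + 1), z.val = y.val + k + 1 ∧
      cd (2 * k + 1) z y = k ∧ cd (2 * k + 1) z x = k - (y.val - x.val) := by
  refine ⟨⟨y.val + k + 1, by omega⟩, rfl, ?_, ?_⟩ <;>
  · rw [cd_def, fin_sub_val, fin_sub_val]
    simp only [Fin.val_mk]
    split_ifs <;> omega

lemma upper_key {r t : ℕ} (hr : 1 ≤ r) (hrt : r ≤ t) (a c : Fin (2 * r + 1))
    (b d : Fin (2 * t + 1)) (ha : a.val < r) (hc : c.val < r) (hac : a.val < c.val)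
    (hδ : cd (2 * t + 1) b d ≤ c.val - a.val) :
    ∃ w : Fin (2 * r + 1) × Fin (2 * t + 1), r ≤ w.1.val ∧
      (strongProd (cycleGraph (2 * r + 1)) (cycleGraph (2 * t + 1))).dist w (c, d) =
        (strongProd (cycleGraph (2 * r + 1)) (cycleGraph (2 * t + 1))).dist w (a, b) +
        (strongProd (cycleGraph (2 * r + 1)) (cycleGraph (2 * t + 1))).dist (a, b) (c, d) := by
  have ht : 1 ≤ t := hr.trans hrt
  obtain ⟨z, hval, hcdc, hcda⟩ := cd_shift hr ha hc (le_of_lt hac)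
  refine ⟨(z, b), show r ≤ z.val by omega, ?_⟩
  rw [strongProd_dist_cycle hr ht, strongProd_dist_cycle hr ht, strongProd_dist_cycle hr ht]
  show max (cd _ z c) (cd _ b d) = max (cd _ z a) (cd _ b b) +
    max (cd _ a c) (cd _ b d)
  rw [hcdc, hcda, cd_self, cd_window ha hc (le_of_lt hac)]
  have e1 : max r (cd (2 * t + 1) b d) = r := max_eq_left (by omega)
  have e2 : max (r - (c.val - a.val)) 0 = r - (c.val - a.val) := max_eq_left (Nat.zero_le _)
  have e3 : max (c.val - a.val) (cd (2 * t + 1) b d) = c.val - a.val := max_eq_left hδ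
  rw [e1, e2, e3]
  omega

lemma upper_key2 {r t : ℕ} (hr : 1 ≤ r) (hrt : r ≤ t) (a c : Fin (2 * r + 1))
    (b d : Fin (2 * t + 1)) (hb : b.val < t) (hd : d.val < t) (hbd : b.val < d.val)
    (hδ : cd (2 * r + 1) a c ≤ d.val - b.val) :
    ∃ w : Fin (2 * r + 1) × Fin (2 * t + 1), t ≤ w.2.val ∧
      (strongProd (cycleGraph (2 * r + 1)) (cycleGraph (2 * t + 1))).dist w (c, d) =
        (strongProd (cycleGraph (2 * r + 1)) (cycleGraph (2 * t + 1))).dist w (a, b) +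
        (strongProd (cycleGraph (2 * r + 1)) (cycleGraph (2 * t + 1))).dist (a, b) (c, d) := by
  have ht : 1 ≤ t := hr.trans hrt
  obtain ⟨z, hval, hcdd, hcdb⟩ := cd_shift ht hb hd (le_of_lt hbd)
  refine ⟨(a, z), show t ≤ z.val by omega, ?_⟩
  rw [strongProd_dist_cycle hr ht, strongProd_dist_cycle hr ht, strongProd_dist_cycle hr ht]
  show max (cd _ a c) (cd _ z d) = max (cd _ a a) (cd _ z b) +
    max (cd _ a c) (cd _ b d)
  rw [hcdd, hcdb, cd_self, cd_window hb hd (le_of_lt hbd)]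
  have e1 : max (cd (2 * r + 1) a c) t = t := max_eq_right (by omega)
  have e2 : max 0 (t - (d.val - b.val)) = t - (d.val - b.val) := max_eq_right (Nat.zero_le _)
  have e3 : max (cd (2 * r + 1) a c) (d.val - b.val) = d.val - b.val := max_eq_right hδ
  rw [e1, e2, e3]
  omega

end Aux

theorem sdim_strongProd_oddCycles_bounds (r t : ℕ) (hr : 1 ≤ r) (hrt : r ≤ t) :
    3 * r * t + 2 * r + 2 * t + 1 - r / 2 ≤
        sdim (strongProd (cycleGraph (2 * r + 1)) (cycleGraph (2 * t + 1))) ∧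
      sdim (strongProd (cycleGraph (2 * r + 1)) (cycleGraph (2 * t + 1))) ≤
        3 * r * t + 2 * r + 2 * t + 1 := by
  classical
  have ht : 1 ≤ t := hr.trans hrt
  set P := strongProd (cycleGraph (2 * r + 1)) (cycleGraph (2 * t + 1)) with hP
  have hPc : P.Connected := strongProd_connected (cycle_connected r) (cycle_connected t)
  have htot : (2 * r + 1) * (2 * t + 1) = 3 * r * t + 2 * r + 2 * t + 1 + r * t := by ring
  have hcardV : Fintype.card (Fin (2 * r + 1) × Fin (2 * t + 1)) = (2 * r + 1) * (2 * t + 1) := by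
    rw [Fintype.card_prod, Fintype.card_fin, Fintype.card_fin]
  -- the independent set
  set Iset : Finset (Fin (2 * r + 1) × Fin (2 * t + 1)) :=
    univ.filter (fun p => p.1.val < r ∧ p.2.val < t) with hIset
  have hIcard : Iset.card = r * t := by
    have he : Iset = (univ.filter (fun a : Fin (2 * r + 1) => a.val < r)) ×ˢ
        (univ.filter (fun b : Fin (2 * t + 1) => b.val < t)) := by
      ext ⟨a, b⟩
      simp only [hIset, Finset.mem_filter, Finset.mem_univ, true_and, Finset.mem_product]
    rw [he, Finset.card_product, card_filter_val_lt (by omega), card_filter_val_lt (by omega)]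
  -- upper bound: Isetᶜ is a strong metric generator
  have hgen : IsStrongMetricGenerator P Isetᶜ := by
    intro u v huv
    by_cases hu : u ∈ Isetᶜ
    · exact ⟨u, hu, Or.inr (by rw [SimpleGraph.dist_self, Nat.zero_add])⟩
    by_cases hv : v ∈ Isetᶜ
    · exact ⟨v, hv, Or.inl (by rw [SimpleGraph.dist_self, Nat.zero_add])⟩
    rw [Finset.mem_compl, not_not, hIset, Finset.mem_filter] at hu hv
    obtain ⟨a, b⟩ := u
    obtain ⟨c, d⟩ := v
    obtain ⟨-, ha, hb⟩ := hu
    obtain ⟨-, hc, hd⟩ := hv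
    dsimp only at ha hb hc hd
    rcases le_or_gt (cd (2 * t + 1) b d) (cd (2 * r + 1) a c) with hcase | hcase
    · -- first coordinate dominates
      rcases lt_trichotomy a.val c.val with h1 | h1 | h1
      · have hδ : cd (2 * t + 1) b d ≤ c.val - a.val := by
          rw [cd_window ha hc (le_of_lt h1)] at hcase; exact hcase
        obtain ⟨w, hw1, hw2⟩ := upper_key hr hrt a c b d ha hc h1 hδ
        refine ⟨w, ?_, Or.inr hw2⟩
        rw [Finset.mem_compl, hIset, Finset.mem_filter]
        rintro ⟨-, hlt, -⟩
        omega
      · exfalso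
        have hac : a = c := Fin.ext h1
        rw [hac, cd_self] at hcase
        have : b = d := cd_eq_zero_iff.mp (Nat.le_zero.mp hcase)
        exact huv (by rw [hac, this])
      · have hδ : cd (2 * t + 1) d b ≤ a.val - c.val := by
          rw [cd_comm _ a c, cd_window hc ha (le_of_lt h1), cd_comm _ b d] at hcase
          exact hcase
        obtain ⟨w, hw1, hw2⟩ := upper_key hr hrt c a d b hc ha h1 hδ
        refine ⟨w, ?_, Or.inl hw2⟩
        rw [Finset.mem_compl, hIset, Finset.mem_filter]
        rintro ⟨-, hlt, -⟩
        omega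
    · -- second coordinate dominates strictly
      rcases lt_trichotomy b.val d.val with h1 | h1 | h1
      · have hδ : cd (2 * r + 1) a c ≤ d.val - b.val := by
          rw [cd_window hb hd (le_of_lt h1)] at hcase; omega
        obtain ⟨w, hw1, hw2⟩ := upper_key2 hr hrt a c b d hb hd h1 hδ
        refine ⟨w, ?_, Or.inr hw2⟩
        rw [Finset.mem_compl, hIset, Finset.mem_filter]
        rintro ⟨-, -, hlt⟩
        omega
      · exfalso
        have hbd : b = d := Fin.ext h1
        rw [hbd, cd_self] at hcase
        omega
      · have hδ : cd (2 * r + 1) c a ≤ b.val - d.val := by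
          rw [cd_comm _ b d, cd_window hd hb (le_of_lt h1), cd_comm _ a c] at hcase
          omega
        obtain ⟨w, hw1, hw2⟩ := upper_key2 hr hrt c a d b hd hb h1 hδ
        refine ⟨w, ?_, Or.inl hw2⟩
        rw [Finset.mem_compl, hIset, Finset.mem_filter]
        rintro ⟨-, -, hlt⟩
        omega
  have hIc : Isetᶜ.card = 3 * r * t + 2 * r + 2 * t + 1 := by
    rw [Finset.card_compl, hIcard, hcardV, htot, Nat.add_sub_cancel]
  -- lower bound on every generator
  have hlow : ∀ N ∈ {n | ∃ s : Finset (Fin (2 * r + 1) × Fin (2 * t + 1)),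
      IsStrongMetricGenerator P s ∧ s.card = n}, 3 * r * t + 2 * r + 2 * t + 1 ≤ N := by
    rintro N ⟨s, hs, rfl⟩
    have hTind : ∀ u ∈ sᶜ, ∀ v ∈ sᶜ, u ≠ v →
        ¬(cd (2 * t + 1) u.2 v.2 = t ∨
          (cd (2 * r + 1) u.1 v.1 = r ∧ cd (2 * t + 1) u.2 v.2 < r)) := by
      intro u hu v hv hne hcond
      obtain ⟨w, hw, hres⟩ := hs u v hne
      have h1 := concreteMD hr hrt u v hcond
      have h2 := concreteMD hr hrt v u (by
        rw [cd_comm _ v.2 u.2, cd_comm _ v.1 u.1]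
        exact hcond)
      rcases resolve_endpoint hPc h1 h2 hne hres with rfl | rfl
      · exact (Finset.mem_compl.mp hu) hw
      · exact (Finset.mem_compl.mp hv) hw
    have hbound := indep_bound hr hrt sᶜ hTind
    have hcompl : sᶜ.card = (2 * r + 1) * (2 * t + 1) - s.card := by
      rw [Finset.card_compl, hcardV]
    have hle : s.card ≤ (2 * r + 1) * (2 * t + 1) := by
      have := Finset.card_le_univ s
      rwa [hcardV] at this
    omega
  have hne : {n | ∃ s : Finset (Fin (2 * r + 1) × Fin (2 * t + 1)),
      IsStrongMetricGenerator P s ∧ s.card = n}.Nonempty := by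
    refine ⟨Finset.univ.card, Finset.univ, fun u v huv => ?_, rfl⟩
    exact ⟨u, Finset.mem_univ u, Or.inr (by rw [SimpleGraph.dist_self, Nat.zero_add])⟩
  constructor
  · calc 3 * r * t + 2 * r + 2 * t + 1 - r / 2 ≤ 3 * r * t + 2 * r + 2 * t + 1 :=
        Nat.sub_le _ _
      _ ≤ sdim P := le_csInf hne hlow
  · exact (Nat.sInf_le ⟨Isetᶜ, hgen, hIc⟩ : sdim P ≤ _)
end
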